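/- Let λ, a, ν' ∈ ℝ and suppose ν' ≤ a + j⁴π⁴ − λ j²π² for every positive integer j. Then for every twice continuously differentiable function φ : [0,1] → ℝ with φ(0) = φ(1) = 0 one has ∫₀¹ φ''(x)² dx − λ·∫₀¹ φ'(x)² dx + a·∫₀¹ φ(x)² dx ≥ ν'·∫₀¹ φ(x)² dx. -/

import Mathlib

open Real Set MeasureTheory intervalIntegral Complex AddCircle
open scoped ENNReal

noncomputable section
local instance fact2 : Fact ((0:ℝ) < 2) := ⟨two_pos⟩

lemma myOfRealDeriv {f : ℝ → ℝ} {u x : ℝ} {t : Set ℝ} (hf : HasDerivWithinAt f u t x) :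
    HasDerivWithinAt (fun y => ((f y : ℝ) : ℂ)) (u : ℂ) t x := by
  exact hf.ofReal_comp

lemma myMeasurable_liftIoc (f : ℝ → ℂ) (hf : Measurable f) :
    Measurable (liftIoc 2 (-1) f) := by
  have h1 : Measurable (AddCircle.equivIoc (2:ℝ) (-1)) :=
    (AddCircle.measurableEquivIoc (2:ℝ) (-1)).measurable_toFun
  exact (hf.comp measurable_subtype_coe).comp h1

lemma myMemLp (f : ℝ → ℂ) (hf : Measurable f) (C : ℝ)
    (hC : ∀ y ∈ Ioc (-1:ℝ) (-1+2), ‖f y‖ ≤ C) :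
    MemLp (liftIoc 2 (-1) f) 2 (@haarAddCircle 2 fact2) := by
  refine MemLp.of_bound (myMeasurable_liftIoc f hf).aestronglyMeasurable C ?_
  refine Filter.Eventually.of_forall (fun z => ?_)
  have : liftIoc 2 (-1) f z = f ((AddCircle.equivIoc (2:ℝ) (-1)) z) := rfl
  rw [this]
  exact hC _ ((AddCircle.equivIoc (2:ℝ) (-1)) z).2


lemma myParseval (f : ℝ → ℂ) (hf : Measurable f) (C : ℝ)
    (hC : ∀ y ∈ Ioc (-1:ℝ) (-1+2), ‖f y‖ ≤ C) :
    HasSum (fun n : ℤ => ‖fourierCoeffOn (lt_add_of_pos_right (-1:ℝ) fact2.out) f n‖ ^ 2)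
      ((1/2) * ∫ x in (-1:ℝ)..(-1+2), ‖f x‖ ^ 2) := by
  have hmem := myMemLp f hf C hC
  set F := hmem.toLp _ with hF
  have hcoeff : ∀ n : ℤ, fourierCoeff (⇑F) n
      = fourierCoeffOn (lt_add_of_pos_right (-1:ℝ) fact2.out) f n := by
    intro n
    rw [← fourierCoeff_liftIoc_eq]
    unfold fourierCoeff
    refine integral_congr_ae ?_
    filter_upwards [hmem.coeFn_toLp] with z hz
    rw [hz]
  have hpow : ∀ x : ℝ, x ^ (2:ℝ≥0∞).toReal = x ^ (2:ℕ) := by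
    intro x
    rw [ENNReal.toReal_ofNat, ← Real.rpow_natCast]
    norm_num
  have hsum : Summable (fun n : ℤ => ‖fourierCoeff (⇑F) n‖ ^ 2) := by
    have h1 := (lp.memℓp (fourierBasis.repr F)).summable (by norm_num)
    simp only [hpow, fourierBasis_repr] at h1
    exact h1
  have htsum := tsum_sq_fourierCoeff F
  have e1 : (∫ t : AddCircle 2, ‖F t‖ ^ 2 ∂haarAddCircle)
      = ∫ t : AddCircle 2, ‖liftIoc 2 (-1) f t‖ ^ 2 ∂haarAddCircle := by
    refine integral_congr_ae ?_
    filter_upwards [hmem.coeFn_toLp] with z hz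
    rw [hz]
  have e2 : (∫ x in (-1:ℝ)..(-1+2), ‖liftIoc 2 (-1) f ((x:ℝ) : AddCircle (2:ℝ))‖ ^ 2)
      = ∫ t : AddCircle 2, ‖liftIoc 2 (-1) f t‖ ^ 2 :=
    AddCircle.intervalIntegral_preimage 2 (-1) (fun t => ‖liftIoc 2 (-1) f t‖ ^ 2)
  have e3 : (∫ x in (-1:ℝ)..(-1+2), ‖liftIoc 2 (-1) f ((x:ℝ) : AddCircle (2:ℝ))‖ ^ 2)
      = ∫ x in (-1:ℝ)..(-1+2), ‖f x‖ ^ 2 := by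
    refine intervalIntegral.integral_congr_ae ?_
    filter_upwards [] with x hx
    rw [uIoc_of_le (by norm_num : (-1:ℝ) ≤ -1+2)] at hx
    rw [liftIoc_coe_apply hx]
  have e4 : (∫ t : AddCircle 2, ‖liftIoc 2 (-1) f t‖ ^ 2)
      = 2 * ∫ t : AddCircle 2, ‖liftIoc 2 (-1) f t‖ ^ 2 ∂haarAddCircle := by
    rw [volume_eq_smul_haarAddCircle, MeasureTheory.integral_smul_measure]
    norm_num
  have hval : (∫ t : AddCircle 2, ‖F t‖ ^ 2 ∂haarAddCircle)
      = (1/2) * ∫ x in (-1:ℝ)..(-1+2), ‖f x‖ ^ 2 := by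
    rw [e1, ← e3, e2, e4]
    ring
  have hfin := hsum.hasSum
  rw [htsum, hval] at hfin
  simpa only [hcoeff] using hfin

lemma myDerivCoeff (f g : ℝ → ℂ) (hcont : ContinuousOn f (uIcc (-1:ℝ) (-1+2)))
    (hderiv : ∀ x ∈ Ioo (-1:ℝ) 1, HasDerivWithinAt f (g x) (Ioi x) x)
    (hint : IntervalIntegrable g volume (-1) (-1+2))
    (hbc : f (-1+2) = f (-1)) (n : ℤ) (hn : n ≠ 0) :
    fourierCoeffOn (lt_add_of_pos_right (-1:ℝ) fact2.out) g n
      = (π * Complex.I * n) * fourierCoeffOn (lt_add_of_pos_right (-1:ℝ) fact2.out) f n := by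
  have hIoo : Ioo (min (-1:ℝ) (-1+2)) (max (-1:ℝ) (-1+2)) = Ioo (-1:ℝ) 1 := by norm_num
  have h := fourierCoeffOn_of_hasDeriv_right (lt_add_of_pos_right (-1:ℝ) fact2.out) hn hcont
    (by rw [hIoo]; exact hderiv) hint
  rw [hbc, sub_self, mul_zero, zero_sub] at h
  have hπ : ((π : ℂ)) ≠ 0 := Complex.ofReal_ne_zero.mpr Real.pi_ne_zero
  have hnc : ((n : ℂ)) ≠ 0 := Int.cast_ne_zero.mpr hn
  field_simp at h
  push_cast at h ⊢
  linear_combination (-1/2 : ℂ) * h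

lemma mySplitInt (f : ℝ → ℝ) (hf1 : IntervalIntegrable (fun x => (f x)^2) volume (-1) 0)
    (hf2 : IntervalIntegrable (fun x => (f x)^2) volume 0 1)
    (hrefl : ∀ y, (f (-y))^2 = (f y)^2) :
    (∫ x in (-1:ℝ)..(-1+2), ‖((f x : ℝ):ℂ)‖^2) = 2 * ∫ x in (0:ℝ)..1, (f x)^2 := by
  have h0 : (∫ x in (-1:ℝ)..(-1+2), ‖((f x:ℝ):ℂ)‖^2) = ∫ x in (-1:ℝ)..1, (f x)^2 := by
    rw [show (-1:ℝ)+2 = 1 by norm_num]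
    refine intervalIntegral.integral_congr fun y _ => ?_
    rw [Complex.norm_real, Real.norm_eq_abs, _root_.sq_abs]
  have h2 : (∫ x in (0:ℝ)..1, (f (-x))^2) = ∫ x in (-1:ℝ)..(-0:ℝ), (f x)^2 :=
    intervalIntegral.integral_comp_neg (fun x => (f x)^2)
  rw [neg_zero] at h2
  have h1 : (∫ x in (-1:ℝ)..0, (f x)^2) = ∫ x in (0:ℝ)..1, (f x)^2 := by
    rw [← h2]
    exact intervalIntegral.integral_congr fun y _ => hrefl y
  rw [h0, ← intervalIntegral.integral_add_adjacent_intervals hf1 hf2, h1]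
  ring

theorem stmt18 (lam a ν' : ℝ)
    (hν' : ∀ j : ℕ+, ν' ≤ a + (j : ℝ) ^ 4 * π ^ 4 - lam * (j : ℝ) ^ 2 * π ^ 2)
    (φ : ℝ → ℝ) (hφ : ContDiffOn ℝ 2 φ (Icc 0 1))
    (h0 : φ 0 = 0) (h1 : φ 1 = 0) :
    (∫ x in (0 : ℝ)..1, (iteratedDerivWithin 2 φ (Icc 0 1) x) ^ 2)
        - lam * (∫ x in (0 : ℝ)..1, (derivWithin φ (Icc 0 1) x) ^ 2)
        + a * (∫ x in (0 : ℝ)..1, (φ x) ^ 2)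
      ≥ ν' * ∫ x in (0 : ℝ)..1, (φ x) ^ 2 := by
  have hUD : UniqueDiffOn ℝ (Icc (0:ℝ) 1) := uniqueDiffOn_Icc one_pos
  set d := derivWithin φ (Icc (0:ℝ) 1) with hd_def
  set e := derivWithin d (Icc (0:ℝ) 1) with he_def
  have hφc : ContinuousOn φ (Icc (0:ℝ) 1) := hφ.continuousOn
  have hd1 : ContDiffOn ℝ 1 d (Icc (0:ℝ) 1) := hφ.derivWithin hUD (by norm_num)
  have hdc : ContinuousOn d (Icc (0:ℝ) 1) := hd1.continuousOn
  have hec : ContinuousOn e (Icc (0:ℝ) 1) := hd1.continuousOn_derivWithin hUD (le_refl 1)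
  have hdφ : ∀ x ∈ Icc (0:ℝ) 1, HasDerivWithinAt φ (d x) (Icc (0:ℝ) 1) x := fun x hx =>
    (hφ.differentiableOn (by norm_num) x hx).hasDerivWithinAt
  have hdd : ∀ x ∈ Icc (0:ℝ) 1, HasDerivWithinAt d (e x) (Icc (0:ℝ) 1) x := fun x hx =>
    (hd1.differentiableOn one_ne_zero x hx).hasDerivWithinAt
  -- clamp
  set pr : ℝ → ℝ := fun x => max 0 (min 1 x) with hpr_def
  have hprc : Continuous pr := continuous_const.max (continuous_const.min continuous_id)
  have hprmem : ∀ x, pr x ∈ Icc (0:ℝ) 1 :=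
    fun x => ⟨le_max_left _ _, max_le (by norm_num) (min_le_left _ _)⟩
  have hpr_id : ∀ x ∈ Icc (0:ℝ) 1, pr x = x := fun x hx => by
    simp only [hpr_def]; rw [min_eq_right hx.2, max_eq_right hx.1]
  have hpr0 : ∀ x : ℝ, x ≤ 0 → pr x = 0 := fun x hx => by
    simp only [hpr_def]; rw [max_eq_left]; exact le_trans (min_le_right _ _) hx
  set P : ℝ → ℝ := fun x => φ (pr x) with hP_def
  set Q : ℝ → ℝ := fun x => d (pr x) with hQ_def
  set N : ℝ → ℝ := fun x => e (pr x) with hN_def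
  have hPc : Continuous P := hφc.comp_continuous hprc hprmem
  have hQc : Continuous Q := hdc.comp_continuous hprc hprmem
  have hNc : Continuous N := hec.comp_continuous hprc hprmem
  set G : ℝ → ℝ := fun x => P x - P (-x) with hG_def
  set D : ℝ → ℝ := fun x => Q x + Q (-x) - d 0 with hD_def
  set E : ℝ → ℝ := fun x => if x < 0 then -(N (-x)) else N x with hE_def
  have hP0 : ∀ x : ℝ, x ≤ 0 → P x = 0 := fun x hx => by
    simp only [hP_def]; rw [hpr0 x hx, h0]
  have hPs : ∀ x ∈ Icc (0:ℝ) 1, P x = φ x := fun x hx => by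
    simp only [hP_def]; rw [hpr_id x hx]
  have hQ0 : ∀ x : ℝ, x ≤ 0 → Q x = d 0 := fun x hx => by
    simp only [hQ_def]; rw [hpr0 x hx]
  have hQs : ∀ x ∈ Icc (0:ℝ) 1, Q x = d x := fun x hx => by
    simp only [hQ_def]; rw [hpr_id x hx]
  have hNs : ∀ x ∈ Icc (0:ℝ) 1, N x = e x := fun x hx => by
    simp only [hN_def]; rw [hpr_id x hx]
  have hGs : ∀ x ∈ Icc (0:ℝ) 1, G x = φ x := fun x hx => by
    rw [hG_def]; simp only []
    rw [hPs x hx, hP0 (-x) (by linarith [hx.1]), sub_zero]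
  have hDs : ∀ x ∈ Icc (0:ℝ) 1, D x = d x := fun x hx => by
    rw [hD_def]; simp only []
    rw [hQs x hx, hQ0 (-x) (by linarith [hx.1])]; ring
  have hEs : ∀ x ∈ Icc (0:ℝ) 1, E x = e x := fun x hx => by
    rw [hE_def]; simp only []
    rw [if_neg (by push_neg; linarith [hx.1]), hNs x hx]
  have hGodd : ∀ x : ℝ, G (-x) = -G x := fun x => by rw [hG_def]; simp only [neg_neg]; ring
  have hDeven : ∀ x : ℝ, D (-x) = D x := fun x => by rw [hD_def]; simp only [neg_neg]; ring
  have hGcont : Continuous G := hPc.sub (hPc.comp continuous_neg)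
  have hDcont : Continuous D := ((hQc.add (hQc.comp continuous_neg)).sub continuous_const)
  have hG1 : G 1 = 0 := by
    rw [hGs 1 (by norm_num)]; exact h1
  have hGm1 : G (-1) = 0 := by rw [hGodd 1, hG1, neg_zero]
  have hDbc : D (-1+2) = D (-1) := by
    rw [show (-1:ℝ)+2 = 1 by norm_num, ← hDeven 1]
  have hGbc : G (-1+2) = G (-1) := by
    rw [show (-1:ℝ)+2 = 1 by norm_num, hG1, hGm1]
  -- derivative facts
  have hdφ' : ∀ y ∈ Ioo (0:ℝ) 1, HasDerivAt φ (d y) y := fun y hy =>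
    (hdφ y (Ioo_subset_Icc_self hy)).hasDerivAt (Icc_mem_nhds hy.1 hy.2)
  have hdd' : ∀ y ∈ Ioo (0:ℝ) 1, HasDerivAt d (e y) y := fun y hy =>
    (hdd y (Ioo_subset_Icc_self hy)).hasDerivAt (Icc_mem_nhds hy.1 hy.2)
  have hIooNhds : Ioo (0:ℝ) 1 ∈ nhdsWithin (0:ℝ) (Ioi (0:ℝ)) :=
    mem_nhdsWithin.mpr ⟨Iio 1, isOpen_Iio, by norm_num, fun y hy => ⟨hy.2, hy.1⟩⟩
  have hGD : ∀ x ∈ Ioo (-1:ℝ) 1, HasDerivWithinAt G (D x) (Ioi x) x := by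
    intro x hx
    rcases lt_trichotomy x 0 with hneg | rfl | hpos
    · have hnx : -x ∈ Ioo (0:ℝ) 1 := ⟨by linarith, by linarith [hx.1]⟩
      have h1 : HasDerivAt (fun y => -φ (-y)) (d (-x)) x := by
        have h2 := ((hdφ' (-x) hnx).comp x (hasDerivAt_neg x)).neg
        simp only [mul_neg, mul_one, neg_neg] at h2
        exact h2
      have hDx : D x = d (-x) := by
        simp only [hD_def, hQ_def]
        rw [hpr0 x hneg.le, hpr_id (-x) (Ioo_subset_Icc_self hnx)]; ring
      have hev : G =ᶠ[nhds x] (fun y => -φ (-y)) := by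
        filter_upwards [Ioo_mem_nhds hx.1 hneg] with y hy
        simp only [hG_def]
        rw [hP0 y hy.2.le, hPs (-y) ⟨by linarith [hy.2], by linarith [hy.1]⟩, zero_sub]
      rw [hDx]
      exact (h1.congr_of_eventuallyEq hev).hasDerivWithinAt
    · have h1 : HasDerivWithinAt φ (d 0) (Ioo (0:ℝ) 1) 0 :=
        (hdφ 0 (by norm_num)).mono Ioo_subset_Icc_self
      have h2 : HasDerivWithinAt G (d 0) (Ioo (0:ℝ) 1) 0 := by
        refine h1.congr (fun y hy => ?_) ?_
        · rw [hGs y (Ioo_subset_Icc_self hy)]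
        · rw [hGs 0 (by norm_num)]
      have hD0 : D 0 = d 0 := by
        simp only [hD_def, hQ_def]
        rw [neg_zero, hpr0 0 le_rfl]; ring
      rw [hD0]
      exact h2.mono_of_mem_nhdsWithin hIooNhds
    · have h1 : HasDerivAt φ (d x) x := hdφ' x ⟨hpos, hx.2⟩
      have hev : G =ᶠ[nhds x] φ := by
        filter_upwards [Ioo_mem_nhds hpos hx.2] with y hy
        exact hGs y (Ioo_subset_Icc_self hy)
      rw [hDs x (Ioo_subset_Icc_self ⟨hpos, hx.2⟩)]
      exact (h1.congr_of_eventuallyEq hev).hasDerivWithinAt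
  have hDE : ∀ x ∈ Ioo (-1:ℝ) 1, HasDerivWithinAt D (E x) (Ioi x) x := by
    intro x hx
    rcases lt_trichotomy x 0 with hneg | rfl | hpos
    · have hnx : -x ∈ Ioo (0:ℝ) 1 := ⟨by linarith, by linarith [hx.1]⟩
      have h1 : HasDerivAt (fun y => d (-y)) (-(e (-x))) x := by
        have h2 := (hdd' (-x) hnx).comp x (hasDerivAt_neg x)
        simp only [mul_neg, mul_one] at h2
        exact h2
      have hEx : E x = -(e (-x)) := by
        simp only [hE_def, hN_def]
        rw [if_pos hneg, hpr_id (-x) (Ioo_subset_Icc_self hnx)]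
      have hev : D =ᶠ[nhds x] (fun y => d (-y)) := by
        filter_upwards [Ioo_mem_nhds hx.1 hneg] with y hy
        simp only [hD_def, hQ_def]
        rw [hpr0 y hy.2.le, hpr_id (-y) ⟨by linarith [hy.2], by linarith [hy.1]⟩]; ring
      rw [hEx]
      exact (h1.congr_of_eventuallyEq hev).hasDerivWithinAt
    · have h1 : HasDerivWithinAt d (e 0) (Ioo (0:ℝ) 1) 0 :=
        (hdd 0 (by norm_num)).mono Ioo_subset_Icc_self
      have h2 : HasDerivWithinAt D (e 0) (Ioo (0:ℝ) 1) 0 := by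
        refine h1.congr (fun y hy => ?_) ?_
        · rw [hDs y (Ioo_subset_Icc_self hy)]
        · rw [hDs 0 (by norm_num)]
      have hE0 : E 0 = e 0 := by
        simp only [hE_def, hN_def]
        rw [if_neg (lt_irrefl 0), hpr_id 0 (by norm_num)]
      rw [hE0]
      exact h2.mono_of_mem_nhdsWithin hIooNhds
    · have h1 : HasDerivAt d (e x) x := hdd' x ⟨hpos, hx.2⟩
      have hev : D =ᶠ[nhds x] d := by
        filter_upwards [Ioo_mem_nhds hpos hx.2] with y hy
        exact hDs y (Ioo_subset_Icc_self hy)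
      rw [hEs x (Ioo_subset_Icc_self ⟨hpos, hx.2⟩)]
      exact (h1.congr_of_eventuallyEq hev).hasDerivWithinAt
  -- complex versions
  set Gc : ℝ → ℂ := fun x => ((G x : ℝ) : ℂ) with hGc_def
  set Dc : ℝ → ℂ := fun x => ((D x : ℝ) : ℂ) with hDc_def
  set Ec : ℝ → ℂ := fun x => ((E x : ℝ) : ℂ) with hEc_def
  set hab := lt_add_of_pos_right (-1:ℝ) fact2.out with hab_def
  set cG : ℤ → ℂ := fun n => fourierCoeffOn hab Gc n with hcG_def
  set cD : ℤ → ℂ := fun n => fourierCoeffOn hab Dc n with hcD_def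
  set cE : ℤ → ℂ := fun n => fourierCoeffOn hab Ec n with hcE_def
  -- E measurability and integrability
  have hEmeas : Measurable E := by
    refine Measurable.ite measurableSet_Iio ?_ hNc.measurable
    exact ((hNc.comp continuous_neg).neg).measurable
  obtain ⟨CN, hCN⟩ := (isCompact_Icc (a := (-1:ℝ)) (b := 1)).exists_bound_of_continuousOn
    hNc.continuousOn
  have hEbound : ∀ y ∈ Icc (-1:ℝ) 1, ‖E y‖ ≤ CN := by
    intro y hy
    simp only [hE_def]
    by_cases h : y < 0
    · rw [if_pos h, norm_neg]
      exact hCN (-y) ⟨by linarith [hy.2], by linarith [hy.1]⟩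
    · rw [if_neg h]
      exact hCN y hy
  have hEint : IntervalIntegrable Ec volume (-1) (-1+2) := by
    rw [intervalIntegrable_iff_integrableOn_Ioc_of_le (by norm_num)]
    refine Measure.integrableOn_of_bounded (M := CN) (by simp) ?_ ?_
    · exact (Complex.measurable_ofReal.comp hEmeas).aestronglyMeasurable
    · refine (ae_restrict_iff' measurableSet_Ioc).mpr (Filter.Eventually.of_forall ?_)
      intro y hy
      have : ‖Ec y‖ = ‖E y‖ := by simp [hEc_def]
      rw [this]
      exact hEbound y ⟨hy.1.le, by linarith [hy.2]⟩
  -- coefficient relations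
  have hrel1 : ∀ n : ℤ, n ≠ 0 → cD n = (π * Complex.I * n) * cG n := by
    intro n hn
    exact myDerivCoeff Gc Dc (Complex.continuous_ofReal.comp hGcont).continuousOn
      (fun x hx => myOfRealDeriv (hGD x hx)) ((Complex.continuous_ofReal.comp hDcont).intervalIntegrable _ _)
      (by simp only [hGc_def]; rw [hGbc]) n hn
  have hrel2 : ∀ n : ℤ, n ≠ 0 → cE n = (π * Complex.I * n) * cD n := by
    intro n hn
    exact myDerivCoeff Dc Ec (Complex.continuous_ofReal.comp hDcont).continuousOn
      (fun x hx => myOfRealDeriv (hDE x hx)) hEint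
      (by simp only [hDc_def]; rw [hDbc]) n hn
  -- zeroth coefficients
  have hGonIcc : ∀ y ∈ Icc (-1:ℝ) 1, True := fun _ _ => trivial
  have hGcint1 : IntervalIntegrable Gc volume (-1) 0 :=
    (Complex.continuous_ofReal.comp hGcont).intervalIntegrable _ _
  have hGcint2 : IntervalIntegrable Gc volume 0 1 :=
    (Complex.continuous_ofReal.comp hGcont).intervalIntegrable _ _
  have hcG0 : cG 0 = 0 := by
    rw [hcG_def]
    simp only []
    rw [fourierCoeffOn_eq_integral]
    simp only [neg_zero, fourier_zero, one_smul]
    have h2 : (∫ x in (0:ℝ)..1, Gc (-x)) = ∫ x in (-1:ℝ)..(-0:ℝ), Gc x :=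
      intervalIntegral.integral_comp_neg Gc
    rw [neg_zero] at h2
    have h1 : (∫ x in (-1:ℝ)..0, Gc x) = - ∫ x in (0:ℝ)..1, Gc x := by
      rw [← h2, ← intervalIntegral.integral_neg]
      refine intervalIntegral.integral_congr fun y _ => ?_
      simp only [hGc_def]
      rw [hGodd y]
      push_cast
      ring
    have h3 : (∫ x in (-1:ℝ)..(-1+2), Gc x) = 0 := by
      rw [show (-1:ℝ)+2 = 1 by norm_num,
        ← intervalIntegral.integral_add_adjacent_intervals hGcint1 hGcint2, h1]
      ring
    rw [h3, smul_zero]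
  have hDcint1 : IntervalIntegrable Dc volume (-1) 0 :=
    (Complex.continuous_ofReal.comp hDcont).intervalIntegrable _ _
  have hDcint2 : IntervalIntegrable Dc volume 0 1 :=
    (Complex.continuous_ofReal.comp hDcont).intervalIntegrable _ _
  have hcD0 : cD 0 = 0 := by
    rw [hcD_def]
    simp only []
    rw [fourierCoeffOn_eq_integral]
    simp only [neg_zero, fourier_zero, one_smul]
    have hd01 : (∫ x in (0:ℝ)..1, d x) = φ 1 - φ 0 := by
      refine intervalIntegral.integral_eq_sub_of_hasDeriv_right ?_ ?_ ?_
      · rw [uIcc_of_le (by norm_num : (0:ℝ) ≤ 1)]; exact hφc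
      · intro y hy
        rw [min_eq_left (by norm_num : (0:ℝ) ≤ 1), max_eq_right (by norm_num : (0:ℝ) ≤ 1)] at hy
        exact (hdφ' y hy).hasDerivWithinAt
      · refine ContinuousOn.intervalIntegrable ?_
        rw [uIcc_of_le (by norm_num : (0:ℝ) ≤ 1)]
        exact hdc
    have hDc01 : (∫ x in (0:ℝ)..1, Dc x) = 0 := by
      have : (∫ x in (0:ℝ)..1, Dc x) = ((∫ x in (0:ℝ)..1, D x : ℝ) : ℂ) := by
        simp only [hDc_def]
        exact intervalIntegral.integral_ofReal
      rw [this]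
      have hDd : (∫ x in (0:ℝ)..1, D x) = ∫ x in (0:ℝ)..1, d x := by
        refine intervalIntegral.integral_congr fun y hy => ?_
        rw [uIcc_of_le (by norm_num : (0:ℝ) ≤ 1)] at hy
        exact hDs y hy
      rw [hDd, hd01, h0, h1]
      norm_num
    have h2 : (∫ x in (0:ℝ)..1, Dc (-x)) = ∫ x in (-1:ℝ)..(-0:ℝ), Dc x :=
      intervalIntegral.integral_comp_neg Dc
    rw [neg_zero] at h2
    have h1' : (∫ x in (-1:ℝ)..0, Dc x) = ∫ x in (0:ℝ)..1, Dc x := by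
      rw [← h2]
      refine intervalIntegral.integral_congr fun y _ => ?_
      simp only [hDc_def]
      rw [hDeven y]
    have h3 : (∫ x in (-1:ℝ)..(-1+2), Dc x) = 0 := by
      rw [show (-1:ℝ)+2 = 1 by norm_num,
        ← intervalIntegral.integral_add_adjacent_intervals hDcint1 hDcint2, h1', hDc01]
      ring
    rw [h3, smul_zero]
  -- Parseval
  have hIocIcc : Ioc (-1:ℝ) (-1+2) ⊆ Icc (-1:ℝ) 1 := by
    intro y hy
    exact ⟨hy.1.le, by linarith [hy.2]⟩
  obtain ⟨CG, hCG⟩ := (isCompact_Icc (a := (-1:ℝ)) (b := 1)).exists_bound_of_continuousOn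
    hGcont.continuousOn
  obtain ⟨CD, hCD⟩ := (isCompact_Icc (a := (-1:ℝ)) (b := 1)).exists_bound_of_continuousOn
    hDcont.continuousOn
  have hreflG : ∀ y : ℝ, (G (-y))^2 = (G y)^2 := fun y => by rw [hGodd y]; ring
  have hreflD : ∀ y : ℝ, (D (-y))^2 = (D y)^2 := fun y => by rw [hDeven y]
  have hreflE : ∀ y : ℝ, (E (-y))^2 = (E y)^2 := by
    intro y
    rcases lt_trichotomy y 0 with h | rfl | h
    · have ha : E y = -(N (-y)) := by simp only [hE_def]; rw [if_pos h]
      have hb : E (-y) = N (-y) := by simp only [hE_def]; rw [if_neg (by push_neg; linarith)]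
      rw [ha, hb]; ring
    · rw [neg_zero]
    · have ha : E y = N y := by simp only [hE_def]; rw [if_neg (by push_neg; linarith)]
      have hb : E (-y) = -(N y) := by simp only [hE_def]; rw [if_pos (by linarith), neg_neg]
      rw [ha, hb]; ring
  have hEsqint : ∀ u v : ℝ, u ≤ v → -1 ≤ u → v ≤ 1 →
      IntervalIntegrable (fun x => (E x)^2) volume u v := by
    intro u v huv hu hv
    rw [intervalIntegrable_iff_integrableOn_Ioc_of_le huv]
    refine Measure.integrableOn_of_bounded (M := CN^2) measure_Ioc_lt_top.ne
      ((hEmeas.pow_const 2).aestronglyMeasurable) ?_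
    refine (ae_restrict_iff' measurableSet_Ioc).mpr (Filter.Eventually.of_forall ?_)
    intro y hy
    have h1 : ‖(E y)^2‖ = ‖E y‖^2 := by
      rw [Real.norm_eq_abs, Real.norm_eq_abs, _root_.abs_of_nonneg (sq_nonneg (E y)), ← _root_.sq_abs]
    rw [h1]
    exact pow_le_pow_left₀ (norm_nonneg _) (hEbound y ⟨by linarith [hy.1], by linarith [hy.2]⟩) 2
  have hPG : HasSum (fun n : ℤ => ‖cG n‖ ^ 2) (∫ x in (0:ℝ)..1, (φ x) ^ 2) := by
    have base := myParseval Gc (Complex.measurable_ofReal.comp hGcont.measurable) CG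
      (fun y hy => by
        have : ‖Gc y‖ = ‖G y‖ := by simp only [hGc_def]; rw [Complex.norm_real]
        rw [this]; exact hCG y (hIocIcc hy))
    have hsplit : (∫ x in (-1:ℝ)..(-1+2), ‖Gc x‖^2) = 2 * ∫ x in (0:ℝ)..1, (G x)^2 :=
      mySplitInt G ((hGcont.pow 2).intervalIntegrable _ _) ((hGcont.pow 2).intervalIntegrable _ _) hreflG
    have hcongr : (∫ x in (0:ℝ)..1, (G x)^2) = ∫ x in (0:ℝ)..1, (φ x)^2 := by
      refine intervalIntegral.integral_congr fun y hy => ?_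
      rw [uIcc_of_le (by norm_num : (0:ℝ) ≤ 1)] at hy
      rw [hGs y hy]
    have hval : (1/2 : ℝ) * (∫ x in (-1:ℝ)..(-1+2), ‖Gc x‖^2) = ∫ x in (0:ℝ)..1, (φ x)^2 := by
      rw [hsplit, hcongr]; ring
    rw [hval] at base
    exact base
  have hPD : HasSum (fun n : ℤ => ‖cD n‖ ^ 2) (∫ x in (0:ℝ)..1, (d x) ^ 2) := by
    have base := myParseval Dc (Complex.measurable_ofReal.comp hDcont.measurable) CD
      (fun y hy => by
        have : ‖Dc y‖ = ‖D y‖ := by simp only [hDc_def]; rw [Complex.norm_real]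
        rw [this]; exact hCD y (hIocIcc hy))
    have hsplit : (∫ x in (-1:ℝ)..(-1+2), ‖Dc x‖^2) = 2 * ∫ x in (0:ℝ)..1, (D x)^2 :=
      mySplitInt D ((hDcont.pow 2).intervalIntegrable _ _) ((hDcont.pow 2).intervalIntegrable _ _) hreflD
    have hcongr : (∫ x in (0:ℝ)..1, (D x)^2) = ∫ x in (0:ℝ)..1, (d x)^2 := by
      refine intervalIntegral.integral_congr fun y hy => ?_
      rw [uIcc_of_le (by norm_num : (0:ℝ) ≤ 1)] at hy
      rw [hDs y hy]
    have hval : (1/2 : ℝ) * (∫ x in (-1:ℝ)..(-1+2), ‖Dc x‖^2) = ∫ x in (0:ℝ)..1, (d x)^2 := by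
      rw [hsplit, hcongr]; ring
    rw [hval] at base
    exact base
  have hPE : HasSum (fun n : ℤ => ‖cE n‖ ^ 2) (∫ x in (0:ℝ)..1, (e x) ^ 2) := by
    have base := myParseval Ec (Complex.measurable_ofReal.comp hEmeas) CN
      (fun y hy => by
        have : ‖Ec y‖ = ‖E y‖ := by simp only [hEc_def]; rw [Complex.norm_real]
        rw [this]; exact hEbound y (hIocIcc hy))
    have hsplit : (∫ x in (-1:ℝ)..(-1+2), ‖Ec x‖^2) = 2 * ∫ x in (0:ℝ)..1, (E x)^2 :=
      mySplitInt E (hEsqint (-1) 0 (by norm_num) le_rfl (by norm_num))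
        (hEsqint 0 1 (by norm_num) (by norm_num) le_rfl) hreflE
    have hcongr : (∫ x in (0:ℝ)..1, (E x)^2) = ∫ x in (0:ℝ)..1, (e x)^2 := by
      refine intervalIntegral.integral_congr fun y hy => ?_
      rw [uIcc_of_le (by norm_num : (0:ℝ) ≤ 1)] at hy
      rw [hEs y hy]
    have hval : (1/2 : ℝ) * (∫ x in (-1:ℝ)..(-1+2), ‖Ec x‖^2) = ∫ x in (0:ℝ)..1, (e x)^2 := by
      rw [hsplit, hcongr]; ring
    rw [hval] at base
    exact base
  -- rewrite D-sums in terms of S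
  have hnormsq : ∀ (c : ℂ) (n : ℤ), ‖(↑π * Complex.I * (n:ℂ)) * c‖ ^ 2 = π^2 * (n:ℝ)^2 * ‖c‖^2 := by
    intro c n
    have h1 : ‖(↑π * Complex.I * (n:ℂ))‖ = π * |(n:ℝ)| := by
      rw [norm_mul, norm_mul, Complex.norm_I, Complex.norm_real, mul_one, Real.norm_eq_abs,
        _root_.abs_of_nonneg Real.pi_pos.le]
      congr 1
      rw [show ((n:ℂ)) = (((n:ℝ)):ℂ) by push_cast; ring, Complex.norm_real, Real.norm_eq_abs]
    rw [norm_mul, h1, mul_pow, mul_pow, _root_.sq_abs]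
  have hPD' : HasSum (fun n : ℤ => π^2 * (n:ℝ)^2 * ‖cG n‖ ^ 2) (∫ x in (0:ℝ)..1, (d x) ^ 2) := by
    have hfe : (fun n : ℤ => ‖cD n‖ ^ 2) = (fun n : ℤ => π^2 * (n:ℝ)^2 * ‖cG n‖ ^ 2) := by
      funext n
      rcases eq_or_ne n 0 with rfl | hn
      · rw [hcD0]; norm_num
      · rw [hrel1 n hn, hnormsq]
    rwa [hfe] at hPD
  have hPE' : HasSum (fun n : ℤ => lam * (π^2 * (n:ℝ)^2 * ‖cG n‖ ^ 2) + (ν' - a) * ‖cG n‖ ^ 2)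
      (lam * (∫ x in (0:ℝ)..1, (d x) ^ 2) + (ν' - a) * ∫ x in (0:ℝ)..1, (φ x) ^ 2) :=
    (hPD'.mul_left lam).add (hPG.mul_left (ν' - a))
  have hterm : ∀ n : ℤ, lam * (π^2 * (n:ℝ)^2 * ‖cG n‖ ^ 2) + (ν' - a) * ‖cG n‖ ^ 2
      ≤ ‖cE n‖ ^ 2 := by
    intro n
    rcases eq_or_ne n 0 with rfl | hn
    · rw [hcG0]
      simp [sq_nonneg]
    · rw [hrel2 n hn, hnormsq, hrel1 n hn, hnormsq]
      have hcast : ((n.natAbs : ℝ)) = |(n:ℝ)| := by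
        rw [Nat.cast_natAbs]; norm_cast
      have hj : ν' ≤ a + ((n.natAbs : ℝ))^4 * π^4 - lam * ((n.natAbs : ℝ))^2 * π^2 :=
        hν' ⟨n.natAbs, Int.natAbs_pos.mpr hn⟩
      rw [hcast] at hj
      have habs2 : |(n:ℝ)| ^ 2 = (n:ℝ)^2 := _root_.sq_abs _
      have habs4 : |(n:ℝ)| ^ 4 = (n:ℝ)^4 := by
        rw [pow_abs, _root_.abs_of_nonneg]; positivity
      rw [habs2, habs4] at hj
      have hS : (0:ℝ) ≤ ‖cG n‖ ^ 2 := sq_nonneg _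
      nlinarith [mul_nonneg (by nlinarith : (0:ℝ) ≤ (n:ℝ)^4 * π^4 - lam * (n:ℝ)^2 * π^2 - ν' + a) hS]
  have hmain := hasSum_le hterm hPE' hPE
  have hiter : (∫ x in (0:ℝ)..1, (iteratedDerivWithin 2 φ (Icc 0 1) x) ^ 2)
      = ∫ x in (0:ℝ)..1, (e x) ^ 2 := by
    refine intervalIntegral.integral_congr (fun x hx => ?_)
    rw [uIcc_of_le (by norm_num : (0:ℝ) ≤ 1)] at hx
    congr 1
    rw [show (2:ℕ) = 1 + 1 from rfl, iteratedDerivWithin_succ]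
    rw [he_def, hd_def]
    refine derivWithin_congr (fun y hy => ?_) ?_
    · exact congrFun iteratedDerivWithin_one y
    · exact congrFun iteratedDerivWithin_one x
  rw [hiter]
  linarith
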